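/- Consider the setting of transmitting independent sources over a discrete memoryless interference channel with deterministic side information about the interfering source: V1 = h1(U1) letterwise, (U1,V1) independent of (U2,V2), X_k^n = f_k^n(U_k^n) for k = 1,2, and Y1^n the output of the memoryless channel. Then the following two inequalities hold: n H(U1|V1) <= I(X1^n; Y1^n | V1^n, V2^n) + H(U1^n | Y1^n, V2^n), and n H(U1) = n H(V1) + n H(U1|V1) <= I(X1^n; Y1^n | V2^n) + H(U1^n | Y1^n, V2^n). -/

import Mathlib

open Finset Real Filter
open scoped Classical

namespace Paper

/-- `p` is a probability mass function on the finite type `α`. -/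
def IsPMF {α : Type*} [Fintype α] (p : α → ℝ) : Prop :=
  (∀ a, 0 ≤ p a) ∧ ∑ a, p a = 1

/-- `k` is a transition probability (channel) from `α` to the finite type `β`. -/
def IsKernel {α β : Type*} [Fintype β] (k : α → β → ℝ) : Prop :=
  ∀ a, IsPMF (k a)

variable {Ω : Type*} [Fintype Ω]

/-- Probability that the random variable `X` takes the value `x`, under the weight `p`. -/
noncomputable def pr {α : Type*} (p : Ω → ℝ) (X : Ω → α) (x : α) : ℝ :=
  ∑ ω, if X ω = x then p ω else 0

/-- Shannon entropy (base 2) of the random variable `X` under `p`. -/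
noncomputable def ent {α : Type*} [Fintype α] (p : Ω → ℝ) (X : Ω → α) : ℝ :=
  ∑ x, -(pr p X x * Real.logb 2 (pr p X x))

/-- Conditional entropy `H(X|Y) = H(X,Y) - H(Y)`. -/
noncomputable def condEnt {α β : Type*} [Fintype α] [Fintype β]
    (p : Ω → ℝ) (X : Ω → α) (Y : Ω → β) : ℝ :=
  ent p (fun ω => (X ω, Y ω)) - ent p Y

/-- Mutual information `I(X;Y) = H(X) + H(Y) - H(X,Y)`. -/
noncomputable def mi {α β : Type*} [Fintype α] [Fintype β]
    (p : Ω → ℝ) (X : Ω → α) (Y : Ω → β) : ℝ :=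
  ent p X + ent p Y - ent p (fun ω => (X ω, Y ω))

/-- Conditional mutual information `I(X;Y|Z) = H(X,Z) + H(Y,Z) - H(X,Y,Z) - H(Z)`. -/
noncomputable def cmi {α β γ : Type*} [Fintype α] [Fintype β] [Fintype γ]
    (p : Ω → ℝ) (X : Ω → α) (Y : Ω → β) (Z : Ω → γ) : ℝ :=
  ent p (fun ω => (X ω, Z ω)) + ent p (fun ω => (Y ω, Z ω))
    - ent p (fun ω => (X ω, Y ω, Z ω)) - ent p Z

/-- The Markov chain `A → B → C`: `A` and `C` are conditionally independent given `B`. -/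
def MarkovChain {α β γ : Type*} (p : Ω → ℝ) (A : Ω → α) (B : Ω → β) (C : Ω → γ) : Prop :=
  ∀ a b c, pr p (fun ω => (A ω, B ω, C ω)) (a, b, c) * pr p B b =
    pr p (fun ω => (A ω, B ω)) (a, b) * pr p (fun ω => (B ω, C ω)) (b, c)

/-! ### Auxiliary general lemmas -/

section AuxGeneral

lemma sum_pi_prod {n : ℕ} {κ : Type*} [Fintype κ] (g : Fin n → κ → ℝ) :
    ∑ b : Fin n → κ, ∏ i, g i (b i) = ∏ i, ∑ c, g i c := by
  rw [Finset.prod_univ_sum, Fintype.piFinset_univ]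

lemma prod_ite_all {n : ℕ} (P : Fin n → Prop) (f : Fin n → ℝ) :
    (if (∀ i, P i) then ∏ i, f i else 0) = ∏ i, if P i then f i else 0 := by
  by_cases h : ∀ i, P i
  · rw [if_pos h]
    exact Finset.prod_congr rfl fun i _ => (if_pos (h i)).symm
  · rw [if_neg h]
    push_neg at h
    obtain ⟨i, hi⟩ := h
    exact (Finset.prod_eq_zero (Finset.mem_univ i)
      (show (if P i then f i else 0) = 0 from if_neg hi)).symm

variable {α β γ : Type*}

lemma pr_nonneg {p : Ω → ℝ} (hp : ∀ ω, 0 ≤ p ω) (X : Ω → α) (x : α) :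
    0 ≤ pr p X x :=
  Finset.sum_nonneg fun ω _ => by by_cases h : X ω = x <;> simp [h, hp ω]

lemma sum_pr [Fintype α] (p : Ω → ℝ) (X : Ω → α) : ∑ x, pr p X x = ∑ ω, p ω := by
  unfold pr
  rw [Finset.sum_comm]
  exact Finset.sum_congr rfl fun ω _ => by simp

lemma pr_id [Fintype α] (p : α → ℝ) (a : α) : pr p id a = p a := by
  unfold pr
  simp

lemma pr_comp_apply (p : Ω → ℝ) (X : Ω → α) {g : α → β} (hg : Function.Injective g)
    (x : α) : pr p (fun ω => g (X ω)) (g x) = pr p X x := by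
  unfold pr
  exact Finset.sum_congr rfl fun ω _ => by
    by_cases h : X ω = x
    · simp [h]
    · rw [if_neg h, if_neg (fun hh => h (hg hh))]

lemma pr_comp_ne (p : Ω → ℝ) (X : Ω → α) {g : α → β} {b : β} (hb : ∀ a, g a ≠ b) :
    pr p (fun ω => g (X ω)) b = 0 := by
  unfold pr
  exact Finset.sum_eq_zero fun ω _ => if_neg (hb (X ω))

lemma ent_comp [Fintype α] [Fintype β] (p : Ω → ℝ) (X : Ω → α)
    {g : α → β} (hg : Function.Injective g) :
    ent p (fun ω => g (X ω)) = ent p X := by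
  unfold ent
  have h0 : ∀ b ∈ Finset.univ, b ∉ Finset.univ.image g →
      (-(pr p (fun ω => g (X ω)) b * Real.logb 2 (pr p (fun ω => g (X ω)) b))) = 0 := by
    intro b _ hb
    have : pr p (fun ω => g (X ω)) b = 0 :=
      pr_comp_ne p X (fun a hab => hb (Finset.mem_image.2 ⟨a, Finset.mem_univ a, hab⟩))
    simp [this]
  rw [← Finset.sum_subset (Finset.subset_univ _) h0,
    Finset.sum_image (fun a _ b _ h => hg h)]
  exact Finset.sum_congr rfl fun a _ => by rw [pr_comp_apply p X hg]

lemma pr_pair_fst [Fintype β] (p : Ω → ℝ) (X : Ω → α) (Y : Ω → β) (x : α) :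
    pr p X x = ∑ y, pr p (fun ω => (X ω, Y ω)) (x, y) := by
  unfold pr
  rw [Finset.sum_comm]
  refine Finset.sum_congr rfl fun ω _ => ?_
  by_cases h : X ω = x <;> simp [h, Prod.ext_iff]

lemma pr_pair_snd [Fintype α] (p : Ω → ℝ) (X : Ω → α) (Y : Ω → β) (y : β) :
    pr p Y y = ∑ x, pr p (fun ω => (X ω, Y ω)) (x, y) := by
  unfold pr
  rw [Finset.sum_comm]
  refine Finset.sum_congr rfl fun ω _ => ?_
  by_cases h : Y ω = y <;> simp [h, Prod.ext_iff]

lemma pr_triple_mid [Fintype β] (p : Ω → ℝ) (X : Ω → α) (Y : Ω → β) (Z : Ω → γ)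
    (x : α) (z : γ) :
    pr p (fun ω => (X ω, Z ω)) (x, z)
      = ∑ y, pr p (fun ω => (X ω, Y ω, Z ω)) (x, y, z) := by
  unfold pr
  rw [Finset.sum_comm]
  refine Finset.sum_congr rfl fun ω _ => ?_
  by_cases h1 : X ω = x <;> by_cases h2 : Z ω = z <;> simp [h1, h2, Prod.ext_iff]

lemma pr_triple_last [Fintype γ] (p : Ω → ℝ) (X : Ω → α) (Y : Ω → β) (Z : Ω → γ)
    (x : α) (y : β) :
    pr p (fun ω => (X ω, Y ω)) (x, y)
      = ∑ z, pr p (fun ω => (X ω, Y ω, Z ω)) (x, y, z) := by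
  unfold pr
  rw [Finset.sum_comm]
  refine Finset.sum_congr rfl fun ω _ => ?_
  by_cases h1 : X ω = x <;> by_cases h2 : Y ω = y <;> simp [h1, h2, Prod.ext_iff]

end AuxGeneral

/-! ### Entropy of distributions -/

section AuxHq

/-- Entropy of a distribution. -/
noncomputable def Hq {α : Type*} [Fintype α] (q : α → ℝ) : ℝ :=
  ∑ x, -(q x * Real.logb 2 (q x))

lemma ent_eq_Hq {α : Type*} [Fintype α] (p : Ω → ℝ) (X : Ω → α) :
    ent p X = Hq (pr p X) := rfl

lemma IsPMF_pr {α : Type*} [Fintype α] {p : Ω → ℝ} (hp : IsPMF p) (X : Ω → α) :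
    IsPMF (pr p X) :=
  ⟨pr_nonneg hp.1 X, by rw [sum_pr, hp.2]⟩

lemma Hq_comp_equiv {α β : Type*} [Fintype α] [Fintype β] (e : α ≃ β) (q : β → ℝ) :
    Hq (fun a => q (e a)) = Hq q :=
  Equiv.sum_comp e (fun b => -(q b * Real.logb 2 (q b)))

lemma Hq_prod {α β : Type*} [Fintype α] [Fintype β] {q1 : α → ℝ} {q2 : β → ℝ}
    (h1 : IsPMF q1) (h2 : IsPMF q2) :
    Hq (fun ab : α × β => q1 ab.1 * q2 ab.2) = Hq q1 + Hq q2 := by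
  unfold Hq
  rw [Fintype.sum_prod_type]
  have key : ∀ a b, -(q1 a * q2 b * Real.logb 2 (q1 a * q2 b))
      = -(q1 a * Real.logb 2 (q1 a)) * q2 b + q1 a * -(q2 b * Real.logb 2 (q2 b)) := by
    intro a b
    rcases eq_or_lt_of_le (h1.1 a) with ha | ha
    · simp [← ha]
    rcases eq_or_lt_of_le (h2.1 b) with hb | hb
    · simp [← hb]
    rw [Real.logb_mul (ne_of_gt ha) (ne_of_gt hb)]
    ring
  calc ∑ a, ∑ b, -(q1 a * q2 b * Real.logb 2 (q1 a * q2 b))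
      = ∑ a, ∑ b, (-(q1 a * Real.logb 2 (q1 a)) * q2 b
          + q1 a * -(q2 b * Real.logb 2 (q2 b))) :=
        Finset.sum_congr rfl fun a _ => Finset.sum_congr rfl fun b _ => key a b
    _ = ∑ a, (-(q1 a * Real.logb 2 (q1 a)) * (∑ b, q2 b)
          + q1 a * ∑ b, -(q2 b * Real.logb 2 (q2 b))) := by
        refine Finset.sum_congr rfl fun a _ => ?_
        rw [Finset.sum_add_distrib, ← Finset.mul_sum, ← Finset.mul_sum]
    _ = (∑ a, -(q1 a * Real.logb 2 (q1 a))) + (∑ a, q1 a) * (∑ b, -(q2 b * Real.logb 2 (q2 b))) := by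
        rw [h2.2]
        simp only [mul_one]
        rw [Finset.sum_add_distrib, ← Finset.sum_mul]
    _ = _ := by rw [h1.2, one_mul]

lemma IsPMF_pi {α : Type*} [Fintype α] {q : α → ℝ} (hq : IsPMF q) (n : ℕ) :
    IsPMF (fun u : Fin n → α => ∏ i, q (u i)) := by
  constructor
  · intro u
    exact Finset.prod_nonneg fun i _ => hq.1 (u i)
  · rw [sum_pi_prod (g := fun _ c => q c)]
    simp [hq.2]

lemma Hq_pi {α : Type*} [Fintype α] {q : α → ℝ} (hq : IsPMF q) (n : ℕ) :
    Hq (fun u : Fin n → α => ∏ i, q (u i)) = (n : ℝ) * Hq q := by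
  induction n with
  | zero => simp [Hq]
  | succ m ih =>
    have h1 : Hq (fun u : Fin (m+1) → α => ∏ i, q (u i))
        = Hq (fun ab : α × (Fin m → α) => ∏ i, q ((Fin.consEquiv (fun _ => α)) ab i)) :=
      (Hq_comp_equiv (Fin.consEquiv (fun _ => α)) (fun u => ∏ i, q (u i))).symm
    have h2 : (fun ab : α × (Fin m → α) => ∏ i, q ((Fin.consEquiv (fun _ => α)) ab i))
        = fun ab : α × (Fin m → α) => q ab.1 * ∏ i, q (ab.2 i) := by
      funext ab
      rw [Fin.prod_univ_succ]
      simp [Fin.consEquiv]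
    rw [h1, h2, Hq_prod hq (IsPMF_pi hq m), ih]
    push_cast
    ring

end AuxHq

/-! ### Conditional mutual information machinery -/

section AuxCMI

variable {α β γ : Type*} [Fintype α] [Fintype β] [Fintype γ]

lemma ent_pair (p : Ω → ℝ) (X : Ω → α) (Y : Ω → β) :
    ent p (fun ω => (X ω, Y ω)) = ∑ x, ∑ y,
      -(pr p (fun ω => (X ω, Y ω)) (x, y)
        * Real.logb 2 (pr p (fun ω => (X ω, Y ω)) (x, y))) := by
  unfold ent
  rw [Fintype.sum_prod_type]

lemma neg_mul_sum_split {s : ℝ} {g : β → ℝ} (h : s = ∑ y, g y) (c : ℝ) :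
    -(s * c) = ∑ y, -(g y * c) := by
  rw [h, Finset.sum_mul]
  exact (Finset.sum_neg_distrib _).symm

lemma cmi_eq_sum (p : Ω → ℝ) (X : Ω → α) (Y : Ω → β) (Z : Ω → γ) :
    cmi p X Y Z = ∑ x, ∑ y, ∑ z,
      pr p (fun ω => (X ω, Y ω, Z ω)) (x, y, z) *
        (Real.logb 2 (pr p (fun ω => (X ω, Y ω, Z ω)) (x, y, z))
          + Real.logb 2 (pr p Z z)
          - Real.logb 2 (pr p (fun ω => (X ω, Z ω)) (x, z))
          - Real.logb 2 (pr p (fun ω => (Y ω, Z ω)) (y, z))) := by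
  have E1 : ent p (fun ω => (X ω, Z ω)) = ∑ x, ∑ y, ∑ z,
      -(pr p (fun ω => (X ω, Y ω, Z ω)) (x, y, z)
        * Real.logb 2 (pr p (fun ω => (X ω, Z ω)) (x, z))) := by
    rw [ent_pair]
    calc ∑ x, ∑ z, -(pr p (fun ω => (X ω, Z ω)) (x, z)
          * Real.logb 2 (pr p (fun ω => (X ω, Z ω)) (x, z)))
        = ∑ x, ∑ z, ∑ y, -(pr p (fun ω => (X ω, Y ω, Z ω)) (x, y, z)
            * Real.logb 2 (pr p (fun ω => (X ω, Z ω)) (x, z))) :=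
          Finset.sum_congr rfl fun x _ => Finset.sum_congr rfl fun z _ =>
            neg_mul_sum_split (pr_triple_mid p X Y Z x z) _
      _ = _ := Finset.sum_congr rfl fun x _ => Finset.sum_comm
  have E2 : ent p (fun ω => (Y ω, Z ω)) = ∑ x, ∑ y, ∑ z,
      -(pr p (fun ω => (X ω, Y ω, Z ω)) (x, y, z)
        * Real.logb 2 (pr p (fun ω => (Y ω, Z ω)) (y, z))) := by
    rw [ent_pair]
    calc ∑ y, ∑ z, -(pr p (fun ω => (Y ω, Z ω)) (y, z)
          * Real.logb 2 (pr p (fun ω => (Y ω, Z ω)) (y, z)))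
        = ∑ y, ∑ z, ∑ x, -(pr p (fun ω => (X ω, Y ω, Z ω)) (x, y, z)
            * Real.logb 2 (pr p (fun ω => (Y ω, Z ω)) (y, z))) :=
          Finset.sum_congr rfl fun y _ => Finset.sum_congr rfl fun z _ =>
            neg_mul_sum_split (pr_pair_snd p X (fun ω => (Y ω, Z ω)) (y, z)) _
      _ = ∑ y, ∑ x, ∑ z, -(pr p (fun ω => (X ω, Y ω, Z ω)) (x, y, z)
            * Real.logb 2 (pr p (fun ω => (Y ω, Z ω)) (y, z))) :=
          Finset.sum_congr rfl fun y _ => Finset.sum_comm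
      _ = _ := Finset.sum_comm
  have E3 : ent p (fun ω => (X ω, Y ω, Z ω)) = ∑ x, ∑ y, ∑ z,
      -(pr p (fun ω => (X ω, Y ω, Z ω)) (x, y, z)
        * Real.logb 2 (pr p (fun ω => (X ω, Y ω, Z ω)) (x, y, z))) := by
    rw [ent_pair p X (fun ω => (Y ω, Z ω))]
    exact Finset.sum_congr rfl fun x _ => Fintype.sum_prod_type (f := fun q : β × γ => -(pr p (fun ω => (X ω, Y ω, Z ω)) (x, q) * Real.logb 2 (pr p (fun ω => (X ω, Y ω, Z ω)) (x, q))))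
  have hZ : ∀ z, pr p Z z = ∑ x, ∑ y, pr p (fun ω => (X ω, Y ω, Z ω)) (x, y, z) := by
    intro z
    rw [pr_pair_snd p X Z z]
    exact Finset.sum_congr rfl fun x _ => pr_triple_mid p X Y Z x z
  have E4 : ent p Z = ∑ x, ∑ y, ∑ z,
      -(pr p (fun ω => (X ω, Y ω, Z ω)) (x, y, z) * Real.logb 2 (pr p Z z)) := by
    unfold ent
    calc ∑ z, -(pr p Z z * Real.logb 2 (pr p Z z))
        = ∑ z, ∑ x, ∑ y, -(pr p (fun ω => (X ω, Y ω, Z ω)) (x, y, z)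
            * Real.logb 2 (pr p Z z)) := by
          refine Finset.sum_congr rfl fun z _ => ?_
          rw [neg_mul_sum_split (hZ z) _]
          exact Finset.sum_congr rfl fun x _ =>
            neg_mul_sum_split rfl _
      _ = ∑ x, ∑ z, ∑ y, -(pr p (fun ω => (X ω, Y ω, Z ω)) (x, y, z)
            * Real.logb 2 (pr p Z z)) := Finset.sum_comm
      _ = _ := Finset.sum_congr rfl fun x _ => Finset.sum_comm
  unfold cmi
  rw [E1, E2, E3, E4]
  simp only [← Finset.sum_add_distrib, ← Finset.sum_sub_distrib]
  refine Finset.sum_congr rfl fun x _ => Finset.sum_congr rfl fun y _ =>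
    Finset.sum_congr rfl fun z _ => ?_
  ring

lemma key_ineq {r a b c : ℝ} (hr : 0 ≤ r) (hra : r ≤ a) (hrb : r ≤ b)
    (hac : a ≤ c) (hbc : b ≤ c) :
    (r - a * b / c) / Real.log 2
      ≤ r * (Real.logb 2 r + Real.logb 2 c - Real.logb 2 a - Real.logb 2 b) := by
  have hlog2 : 0 < Real.log 2 := Real.log_pos (by norm_num)
  have ha0 : 0 ≤ a := le_trans hr hra
  have hb0 : 0 ≤ b := le_trans hr hrb
  have hc0 : 0 ≤ c := le_trans ha0 hac
  rcases eq_or_lt_of_le hr with h0 | h0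
  · rw [← h0]
    simp only [zero_mul, zero_sub]
    apply div_nonpos_of_nonpos_of_nonneg _ (le_of_lt hlog2)
    have : 0 ≤ a * b / c := by positivity
    linarith
  · have ha : 0 < a := lt_of_lt_of_le h0 hra
    have hb : 0 < b := lt_of_lt_of_le h0 hrb
    have hc : 0 < c := lt_of_lt_of_le ha hac
    have hlog : Real.log (a * b / (r * c)) ≤ a * b / (r * c) - 1 :=
      Real.log_le_sub_one_of_pos (by positivity)
    have e : Real.logb 2 r + Real.logb 2 c - Real.logb 2 a - Real.logb 2 b
        = -(Real.log (a * b / (r * c)) / Real.log 2) := by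
      simp only [Real.logb]
      rw [Real.log_div (by positivity) (by positivity),
        Real.log_mul (ne_of_gt ha) (ne_of_gt hb),
        Real.log_mul (ne_of_gt h0) (ne_of_gt hc)]
      ring
    rw [e]
    have h2 : r * Real.log (a * b / (r * c)) ≤ a * b / c - r := by
      have hm := mul_le_mul_of_nonneg_left hlog hr
      have he2 : r * (a * b / (r * c) - 1) = a * b / c - r := by
        field_simp
      linarith
    have e2 : r * -(Real.log (a * b / (r * c)) / Real.log 2)
        = (-(r * Real.log (a * b / (r * c)))) / Real.log 2 := by ring
    rw [e2, div_le_div_iff_of_pos_right hlog2]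
    linarith

lemma cmi_nonneg {p : Ω → ℝ} (hp : IsPMF p) (X : Ω → α) (Y : Ω → β) (Z : Ω → γ) :
    0 ≤ cmi p X Y Z := by
  have hr0 : ∀ q, 0 ≤ pr p (fun ω => (X ω, Y ω, Z ω)) q := pr_nonneg hp.1 _
  have hXZ : ∀ x z, pr p (fun ω => (X ω, Z ω)) (x, z)
      = ∑ y, pr p (fun ω => (X ω, Y ω, Z ω)) (x, y, z) := pr_triple_mid p X Y Z
  have hYZ : ∀ y z, pr p (fun ω => (Y ω, Z ω)) (y, z)
      = ∑ x, pr p (fun ω => (X ω, Y ω, Z ω)) (x, y, z) :=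
    fun y z => pr_pair_snd p X (fun ω => (Y ω, Z ω)) (y, z)
  have hZX : ∀ z, pr p Z z = ∑ x, pr p (fun ω => (X ω, Z ω)) (x, z) :=
    fun z => pr_pair_snd p X Z z
  have hZY : ∀ z, pr p Z z = ∑ y, pr p (fun ω => (Y ω, Z ω)) (y, z) :=
    fun z => pr_pair_snd p Y Z z
  have hb1 : ∀ x y z, pr p (fun ω => (X ω, Y ω, Z ω)) (x, y, z)
      ≤ pr p (fun ω => (X ω, Z ω)) (x, z) := fun x y z => by
    rw [hXZ]
    exact Finset.single_le_sum
      (f := fun y' => pr p (fun ω => (X ω, Y ω, Z ω)) (x, y', z))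
      (fun y' _ => hr0 _) (Finset.mem_univ y)
  have hb2 : ∀ x y z, pr p (fun ω => (X ω, Y ω, Z ω)) (x, y, z)
      ≤ pr p (fun ω => (Y ω, Z ω)) (y, z) := fun x y z => by
    rw [hYZ]
    exact Finset.single_le_sum
      (f := fun x' => pr p (fun ω => (X ω, Y ω, Z ω)) (x', y, z))
      (fun x' _ => hr0 _) (Finset.mem_univ x)
  have hb3 : ∀ x z, pr p (fun ω => (X ω, Z ω)) (x, z) ≤ pr p Z z := fun x z => by
    rw [hZX]
    exact Finset.single_le_sum
      (f := fun x' => pr p (fun ω => (X ω, Z ω)) (x', z))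
      (fun x' _ => pr_nonneg hp.1 _ _) (Finset.mem_univ x)
  have hb4 : ∀ y z, pr p (fun ω => (Y ω, Z ω)) (y, z) ≤ pr p Z z := fun y z => by
    rw [hZY]
    exact Finset.single_le_sum
      (f := fun y' => pr p (fun ω => (Y ω, Z ω)) (y', z))
      (fun y' _ => pr_nonneg hp.1 _ _) (Finset.mem_univ y)
  have hr1 : ∑ x, ∑ y, ∑ z, pr p (fun ω => (X ω, Y ω, Z ω)) (x, y, z) = 1 := by
    have h := sum_pr p (fun ω => (X ω, Y ω, Z ω))
    rw [hp.2] at h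
    rw [← h, Fintype.sum_prod_type]
    exact Finset.sum_congr rfl fun x _ => (Fintype.sum_prod_type (f := fun q : β × γ => pr p (fun ω => (X ω, Y ω, Z ω)) (x, q))).symm
  have hS : ∑ x, ∑ y, ∑ z, (pr p (fun ω => (X ω, Z ω)) (x, z)
      * pr p (fun ω => (Y ω, Z ω)) (y, z) / pr p Z z) ≤ 1 := by
    have hre : ∑ x, ∑ y, ∑ z, (pr p (fun ω => (X ω, Z ω)) (x, z)
        * pr p (fun ω => (Y ω, Z ω)) (y, z) / pr p Z z)
        = ∑ z, ((∑ x, pr p (fun ω => (X ω, Z ω)) (x, z))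
          * (∑ y, pr p (fun ω => (Y ω, Z ω)) (y, z)) / pr p Z z) := by
      calc ∑ x, ∑ y, ∑ z, (pr p (fun ω => (X ω, Z ω)) (x, z)
            * pr p (fun ω => (Y ω, Z ω)) (y, z) / pr p Z z)
          = ∑ x, ∑ z, ∑ y, (pr p (fun ω => (X ω, Z ω)) (x, z)
            * pr p (fun ω => (Y ω, Z ω)) (y, z) / pr p Z z) :=
            Finset.sum_congr rfl fun x _ => Finset.sum_comm
        _ = ∑ z, ∑ x, ∑ y, (pr p (fun ω => (X ω, Z ω)) (x, z)
            * pr p (fun ω => (Y ω, Z ω)) (y, z) / pr p Z z) := Finset.sum_comm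
        _ = _ := by
            refine Finset.sum_congr rfl fun z _ => ?_
            rw [Finset.sum_mul_sum, Finset.sum_div]
            exact Finset.sum_congr rfl fun x _ => (Finset.sum_div _ _ _).symm
    rw [hre]
    have hle : ∀ z, ((∑ x, pr p (fun ω => (X ω, Z ω)) (x, z))
        * (∑ y, pr p (fun ω => (Y ω, Z ω)) (y, z)) / pr p Z z) ≤ pr p Z z := by
      intro z
      rw [← hZX, ← hZY]
      rcases eq_or_lt_of_le (pr_nonneg hp.1 Z z) with h0 | h0
      · rw [← h0]
        simp
      · rw [mul_div_assoc, div_self (ne_of_gt h0), mul_one]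
    calc ∑ z, ((∑ x, pr p (fun ω => (X ω, Z ω)) (x, z))
          * (∑ y, pr p (fun ω => (Y ω, Z ω)) (y, z)) / pr p Z z)
        ≤ ∑ z, pr p Z z := Finset.sum_le_sum fun z _ => hle z
      _ = 1 := by rw [sum_pr, hp.2]
  rw [cmi_eq_sum]
  have hkey : ∑ x, ∑ y, ∑ z, ((pr p (fun ω => (X ω, Y ω, Z ω)) (x, y, z)
      - pr p (fun ω => (X ω, Z ω)) (x, z) * pr p (fun ω => (Y ω, Z ω)) (y, z)
        / pr p Z z) / Real.log 2)
      ≤ ∑ x, ∑ y, ∑ z,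
      pr p (fun ω => (X ω, Y ω, Z ω)) (x, y, z) *
        (Real.logb 2 (pr p (fun ω => (X ω, Y ω, Z ω)) (x, y, z))
          + Real.logb 2 (pr p Z z)
          - Real.logb 2 (pr p (fun ω => (X ω, Z ω)) (x, z))
          - Real.logb 2 (pr p (fun ω => (Y ω, Z ω)) (y, z))) := by
    refine Finset.sum_le_sum fun x _ => Finset.sum_le_sum fun y _ =>
      Finset.sum_le_sum fun z _ => ?_
    exact key_ineq (hr0 _) (hb1 x y z) (hb2 x y z) (hb3 x z) (hb4 y z)
  have hsplit : ∑ x, ∑ y, ∑ z, ((pr p (fun ω => (X ω, Y ω, Z ω)) (x, y, z)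
      - pr p (fun ω => (X ω, Z ω)) (x, z) * pr p (fun ω => (Y ω, Z ω)) (y, z)
        / pr p Z z) / Real.log 2)
      = ((∑ x, ∑ y, ∑ z, pr p (fun ω => (X ω, Y ω, Z ω)) (x, y, z))
        - ∑ x, ∑ y, ∑ z, (pr p (fun ω => (X ω, Z ω)) (x, z)
          * pr p (fun ω => (Y ω, Z ω)) (y, z) / pr p Z z)) / Real.log 2 := by
    simp only [← Finset.sum_div, ← Finset.sum_sub_distrib]
  have hlog2 : 0 < Real.log 2 := Real.log_pos (by norm_num)
  have hfin : 0 ≤ ((∑ x, ∑ y, ∑ z, pr p (fun ω => (X ω, Y ω, Z ω)) (x, y, z))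
      - ∑ x, ∑ y, ∑ z, (pr p (fun ω => (X ω, Z ω)) (x, z)
        * pr p (fun ω => (Y ω, Z ω)) (y, z) / pr p Z z)) / Real.log 2 := by
    apply div_nonneg _ (le_of_lt hlog2)
    rw [hr1]
    linarith
  linarith [hkey, hsplit ▸ hfin]

lemma cmi_eq_zero {p : Ω → ℝ} (hp : IsPMF p) {X : Ω → α} {Y : Ω → β} {Z : Ω → γ}
    (hm : MarkovChain p X Z Y) : cmi p X Y Z = 0 := by
  rw [cmi_eq_sum]
  refine Finset.sum_eq_zero fun x _ => Finset.sum_eq_zero fun y _ =>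
    Finset.sum_eq_zero fun z _ => ?_
  have hswap : pr p (fun ω => (X ω, Z ω, Y ω)) (x, z, y)
      = pr p (fun ω => (X ω, Y ω, Z ω)) (x, y, z) :=
    pr_comp_apply p (fun ω => (X ω, Y ω, Z ω))
      (g := fun q : α × β × γ => (q.1, q.2.2, q.2.1))
      (fun a b hh => by
        obtain ⟨a1, a2, a3⟩ := a
        obtain ⟨b1, b2, b3⟩ := b
        simp only [Prod.ext_iff] at hh ⊢
        tauto) (x, y, z)
  have hswap2 : pr p (fun ω => (Z ω, Y ω)) (z, y)
      = pr p (fun ω => (Y ω, Z ω)) (y, z) :=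
    pr_comp_apply p (fun ω => (Y ω, Z ω)) (g := Prod.swap)
      Prod.swap_injective (y, z)
  have hmk := hm x z y
  rw [hswap, hswap2] at hmk
  rcases eq_or_lt_of_le (pr_nonneg hp.1 (fun ω => (X ω, Y ω, Z ω)) (x, y, z)) with h0 | h0
  · rw [← h0, zero_mul]
  · have hXZpos : 0 < pr p (fun ω => (X ω, Z ω)) (x, z) := by
      rw [pr_triple_mid p X Y Z x z]
      calc 0 < pr p (fun ω => (X ω, Y ω, Z ω)) (x, y, z) := h0
        _ ≤ _ := Finset.single_le_sum
          (f := fun y' => pr p (fun ω => (X ω, Y ω, Z ω)) (x, y', z))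
          (fun y' _ => pr_nonneg hp.1 _ _) (Finset.mem_univ y)
    have hZpos : 0 < pr p Z z := by
      calc 0 < pr p (fun ω => (X ω, Z ω)) (x, z) := hXZpos
        _ ≤ pr p Z z := by
          rw [pr_pair_snd p X Z z]
          exact Finset.single_le_sum
            (f := fun x' => pr p (fun ω => (X ω, Z ω)) (x', z))
            (fun x' _ => pr_nonneg hp.1 _ _) (Finset.mem_univ x)
    have hYZpos : 0 < pr p (fun ω => (Y ω, Z ω)) (y, z) := by
      rcases eq_or_lt_of_le (pr_nonneg hp.1 (fun ω => (Y ω, Z ω)) (y, z)) with h0' | h0'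
      · exfalso
        have := mul_pos h0 hZpos
        rw [hmk, ← h0', mul_zero] at this
        exact lt_irrefl 0 this
      · exact h0'
    have hlogeq : Real.logb 2 (pr p (fun ω => (X ω, Y ω, Z ω)) (x, y, z) * pr p Z z)
        = Real.logb 2 (pr p (fun ω => (X ω, Z ω)) (x, z)
          * pr p (fun ω => (Y ω, Z ω)) (y, z)) := by rw [hmk]
    rw [Real.logb_mul (ne_of_gt h0) (ne_of_gt hZpos),
      Real.logb_mul (ne_of_gt hXZpos) (ne_of_gt hYZpos)] at hlogeq
    apply mul_eq_zero_of_right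
    linarith

lemma condEnt_nonneg {p : Ω → ℝ} (hp : IsPMF p) (X : Ω → α) (Z : Ω → γ) :
    0 ≤ condEnt p X Z := by
  have h := cmi_nonneg hp X X Z
  have e : ent p (fun ω => (X ω, X ω, Z ω)) = ent p (fun ω => (X ω, Z ω)) :=
    ent_comp p (fun ω => (X ω, Z ω)) (g := fun q : α × γ => (q.1, q.1, q.2))
      (fun a b hh => by
        simp only [Prod.ext_iff] at hh ⊢
        tauto)
  unfold cmi at h
  unfold condEnt
  rw [e] at h
  linarith

lemma condEnt_chain (p : Ω → ℝ) (X : Ω → α) (Y : Ω → β) (Z : Ω → γ) :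
    condEnt p X Z = cmi p X Y Z + condEnt p X (fun ω => (Y ω, Z ω)) := by
  simp only [cmi, condEnt]
  ring

lemma cmi_chain_fn {δ : Type*} [Fintype δ] (p : Ω → ℝ) (X : Ω → α) (Y : Ω → β)
    (Z : Ω → γ) (k : α → δ) :
    cmi p X Y Z = cmi p (fun ω => k (X ω)) Y Z
      + cmi p X Y (fun ω => (k (X ω), Z ω)) := by
  have ha : ent p (fun ω => (X ω, (k (X ω), Z ω))) = ent p (fun ω => (X ω, Z ω)) :=
    ent_comp p (fun ω => (X ω, Z ω)) (g := fun q : α × γ => (q.1, (k q.1, q.2)))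
      (fun a b hh => by
        simp only [Prod.ext_iff] at hh ⊢
        tauto)
  have hb : ent p (fun ω => (X ω, Y ω, (k (X ω), Z ω)))
      = ent p (fun ω => (X ω, Y ω, Z ω)) :=
    ent_comp p (fun ω => (X ω, Y ω, Z ω))
      (g := fun q : α × β × γ => (q.1, q.2.1, (k q.1, q.2.2)))
      (fun a b hh => by
        obtain ⟨a1, a2, a3⟩ := a
        obtain ⟨b1, b2, b3⟩ := b
        simp only [Prod.ext_iff] at hh ⊢
        tauto)
  have hc : ent p (fun ω => (Y ω, (k (X ω), Z ω)))
      = ent p (fun ω => (k (X ω), Y ω, Z ω)) :=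
    ent_comp p (fun ω => (k (X ω), (Y ω, Z ω)))
      (g := fun q : δ × β × γ => (q.2.1, (q.1, q.2.2)))
      (fun a b hh => by
        obtain ⟨a1, a2, a3⟩ := a
        obtain ⟨b1, b2, b3⟩ := b
        simp only [Prod.ext_iff] at hh ⊢
        tauto)
  simp only [cmi]
  linarith

lemma cmi_relabel_cond {γ' : Type*} [Fintype γ'] (p : Ω → ℝ) (X : Ω → α) (Y : Ω → β)
    (Z : Ω → γ) {e : γ → γ'} (he : Function.Injective e) :
    cmi p X Y (fun ω => e (Z ω)) = cmi p X Y Z := by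
  have h1 : ent p (fun ω => (X ω, e (Z ω))) = ent p (fun ω => (X ω, Z ω)) :=
    ent_comp p (fun ω => (X ω, Z ω)) (g := fun q : α × γ => (q.1, e q.2))
      (fun a b hh => by
        simp only [Prod.ext_iff] at hh ⊢
        exact ⟨hh.1, he hh.2⟩)
  have h2 : ent p (fun ω => (Y ω, e (Z ω))) = ent p (fun ω => (Y ω, Z ω)) :=
    ent_comp p (fun ω => (Y ω, Z ω)) (g := fun q : β × γ => (q.1, e q.2))
      (fun a b hh => by
        simp only [Prod.ext_iff] at hh ⊢
        exact ⟨hh.1, he hh.2⟩)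
  have h3 : ent p (fun ω => (X ω, Y ω, e (Z ω))) = ent p (fun ω => (X ω, Y ω, Z ω)) :=
    ent_comp p (fun ω => (X ω, Y ω, Z ω))
      (g := fun q : α × β × γ => (q.1, q.2.1, e q.2.2))
      (fun a b hh => by
        obtain ⟨a1, a2, a3⟩ := a
        obtain ⟨b1, b2, b3⟩ := b
        simp only [Prod.ext_iff] at hh ⊢
        exact ⟨hh.1, hh.2.1, he hh.2.2⟩)
  have h4 : ent p (fun ω => e (Z ω)) = ent p Z := ent_comp p Z he
  simp only [cmi]
  linarith

end AuxCMI

/-! ## Statement 9: converse inequalities for the interference channel with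
deterministic side information `V1 = h1(U1)` (equations (56)–(66) of the paper). -/

section Stmt9

variable {U1 V1 U2 V2 X1 X2 Y1 Y2 : Type}
  [Fintype U1] [Fintype V1] [Fintype U2] [Fintype V2]
  [Fintype X1] [Fintype X2] [Fintype Y1] [Fintype Y2]

/-- Joint law of `(U_1^n, (U_2^n, V_2^n), (Y_1^n, Y_2^n))` when the sources are i.i.d.,
the encoders are deterministic, and the channel is memoryless. -/
noncomputable def jointDet (ch : X1 × X2 → Y1 × Y2 → ℝ)
    (pU1 : U1 → ℝ) (q2 : U2 × V2 → ℝ) (n : ℕ)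
    (f1 : (Fin n → U1) → Fin n → X1) (f2 : (Fin n → U2) → Fin n → X2) :
    (Fin n → U1) × (Fin n → U2 × V2) × (Fin n → Y1 × Y2) → ℝ :=
  fun (u1, uv2, y) =>
    (∏ i, pU1 (u1 i)) * (∏ i, q2 (uv2 i)) *
      ∏ i, ch (f1 u1 i, f2 (fun j => (uv2 j).1) i) (y i)

lemma pi_pushforward {A B' : Type*} [Fintype A] [Fintype B'] (q : A → ℝ) (g : A → B')
    {n : ℕ} (w : Fin n → B') :
    (∑ u : Fin n → A, if (fun i => g (u i)) = w then ∏ i, q (u i) else 0)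
      = ∏ i, pr q g (w i) := by
  have h1 : ∀ u : Fin n → A,
      (if (fun i => g (u i)) = w then ∏ i, q (u i) else 0)
        = ∏ i, if g (u i) = w i then q (u i) else 0 := by
    intro u
    rw [← prod_ite_all]
    congr 1
    simp [funext_iff]
  rw [Finset.sum_congr rfl (fun u _ => h1 u),
    sum_pi_prod (g := fun i c => if g c = w i then q c else 0)]
  rfl

/-- The conditional law of `Y_1^n` given `X_1^n = x` and `V_2^n = v`
(joint with the probability of `V_2^n = v`). -/
noncomputable def Gfun (ch : X1 × X2 → Y1 × Y2 → ℝ) (q2 : U2 × V2 → ℝ) (n : ℕ)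
    (f2 : (Fin n → U2) → Fin n → X2) (x : Fin n → X1) (v : Fin n → V2)
    (y : Fin n → Y1) : ℝ :=
  ∑ w : Fin n → U2 × V2, if (fun i => (w i).2) = v then
      (∏ i, q2 (w i)) * ∑ c : Fin n → Y1 × Y2, (if (fun i => (c i).1) = y then
        ∏ i, ch (x i, f2 (fun j => (w j).1) i) (c i) else 0) else 0

section JointAux

variable (ch : X1 × X2 → Y1 × Y2 → ℝ) (pU1 : U1 → ℝ) (q2 : U2 × V2 → ℝ) (n : ℕ)
  (f1 : (Fin n → U1) → Fin n → X1) (f2 : (Fin n → U2) → Fin n → X2)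

lemma joint_pr {T : Type} [Fintype T] (β : (Fin n → U1) → T)
    (u : Fin n → U1) (t : T) (v : Fin n → V2) (y : Fin n → Y1) :
    pr (jointDet ch pU1 q2 n f1 f2)
      (fun ω => (ω.1, (β ω.1, fun i => (ω.2.1 i).2), fun i => (ω.2.2 i).1))
      (u, (t, v), y)
    = if β u = t then (∏ i, pU1 (u i)) * Gfun ch q2 n f2 (f1 u) v y else 0 := by
  unfold Gfun
  have expand : pr (jointDet ch pU1 q2 n f1 f2)
      (fun ω => (ω.1, (β ω.1, fun i => (ω.2.1 i).2), fun i => (ω.2.2 i).1))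
      (u, (t, v), y)
      = ∑ a : Fin n → U1, ∑ bc : (Fin n → U2 × V2) × (Fin n → Y1 × Y2),
        (if ((a, (β a, fun i => ((bc.1) i).2), fun i => ((bc.2) i).1) :
            (Fin n → U1) × (T × (Fin n → V2)) × (Fin n → Y1)) = (u, (t, v), y) then
          jointDet ch pU1 q2 n f1 f2 (a, bc.1, bc.2) else 0) := by
    unfold pr
    rw [Fintype.sum_prod_type]
    refine Finset.sum_congr rfl fun a _ => Finset.sum_congr rfl fun bc _ => ?_
    congr 1
  rw [expand]
  have key : ∀ a : Fin n → U1,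
      (∑ bc : (Fin n → U2 × V2) × (Fin n → Y1 × Y2),
        if ((a, (β a, fun i => ((bc.1) i).2), fun i => ((bc.2) i).1) :
            (Fin n → U1) × (T × (Fin n → V2)) × (Fin n → Y1)) = (u, (t, v), y) then
          jointDet ch pU1 q2 n f1 f2 (a, bc.1, bc.2) else 0)
      = if a = u ∧ β a = t then (∏ i, pU1 (a i)) *
          (∑ w : Fin n → U2 × V2, if (fun i => (w i).2) = v then
            (∏ i, q2 (w i)) * ∑ c : Fin n → Y1 × Y2, (if (fun i => (c i).1) = y then
              ∏ i, ch (f1 a i, f2 (fun j => (w j).1) i) (c i) else 0) else 0)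
        else 0 := by
    intro a
    rw [Fintype.sum_prod_type]
    by_cases hab : a = u ∧ β a = t
    · rw [if_pos hab, Finset.mul_sum]
      refine Finset.sum_congr rfl fun w _ => ?_
      by_cases hw : (fun i => (w i).2) = v
      · rw [if_pos hw, Finset.mul_sum, Finset.mul_sum]
        refine Finset.sum_congr rfl fun c _ => ?_
        by_cases hc : (fun i => (c i).1) = y
        · rw [if_pos hc, if_pos]
          · simp only [jointDet]
            ring
          · simp only [Prod.mk.injEq]
            exact ⟨hab.1, ⟨hab.2, hw⟩, hc⟩
        · rw [if_neg hc, mul_zero, mul_zero, if_neg]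
          rintro hcond
          rw [Prod.mk.injEq, Prod.mk.injEq, Prod.mk.injEq] at hcond
          exact hc hcond.2.2
      · rw [if_neg hw, mul_zero]
        refine Finset.sum_eq_zero fun c _ => ?_
        rw [if_neg]
        rintro hcond
        rw [Prod.mk.injEq, Prod.mk.injEq, Prod.mk.injEq] at hcond
        exact hw hcond.2.1.2
    · rw [if_neg hab]
      refine Finset.sum_eq_zero fun w _ => Finset.sum_eq_zero fun c _ => ?_
      rw [if_neg]
      rintro hcond
      rw [Prod.mk.injEq, Prod.mk.injEq, Prod.mk.injEq] at hcond
      exact hab ⟨hcond.1, hcond.2.1.1⟩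
  calc ∑ a : Fin n → U1, ∑ bc : (Fin n → U2 × V2) × (Fin n → Y1 × Y2),
        (if ((a, (β a, fun i => ((bc.1) i).2), fun i => ((bc.2) i).1) :
            (Fin n → U1) × (T × (Fin n → V2)) × (Fin n → Y1)) = (u, (t, v), y) then
          jointDet ch pU1 q2 n f1 f2 (a, bc.1, bc.2) else 0)
      = ∑ a : Fin n → U1, if a = u ∧ β a = t then (∏ i, pU1 (a i)) *
          (∑ w : Fin n → U2 × V2, if (fun i => (w i).2) = v then
            (∏ i, q2 (w i)) * ∑ c : Fin n → Y1 × Y2, (if (fun i => (c i).1) = y then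
              ∏ i, ch (f1 a i, f2 (fun j => (w j).1) i) (c i) else 0) else 0)
        else 0 := Finset.sum_congr rfl fun a _ => key a
    _ = _ := by
        simp only [ite_and]
        rw [Finset.sum_ite_eq' Finset.univ u]
        simp

lemma Gfun_sum (hch : IsKernel ch) (x : Fin n → X1) (v : Fin n → V2) :
    ∑ y : Fin n → Y1, Gfun ch q2 n f2 x v y = ∏ i, pr q2 Prod.snd (v i) := by
  unfold Gfun
  rw [Finset.sum_comm]
  have hw : ∀ w : Fin n → U2 × V2,
      (∑ y : Fin n → Y1, if (fun i => (w i).2) = v then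
        (∏ i, q2 (w i)) * ∑ c : Fin n → Y1 × Y2, (if (fun i => (c i).1) = y then
          ∏ i, ch (x i, f2 (fun j => (w j).1) i) (c i) else 0) else 0)
      = if (fun i => (w i).2) = v then (∏ i, q2 (w i)) else 0 := by
    intro w
    by_cases hv : (fun i => (w i).2) = v
    · simp only [if_pos hv]
      rw [← Finset.mul_sum]
      have h2 : ∑ y : Fin n → Y1, ∑ c : Fin n → Y1 × Y2,
          (if (fun i => (c i).1) = y then
            ∏ i, ch (x i, f2 (fun j => (w j).1) i) (c i) else 0)
          = ∑ c : Fin n → Y1 × Y2, ∏ i, ch (x i, f2 (fun j => (w j).1) i) (c i) := by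
        rw [Finset.sum_comm]
        refine Finset.sum_congr rfl fun c _ => ?_
        simp
      rw [h2, sum_pi_prod (g := fun i yy => ch (x i, f2 (fun j => (w j).1) i) yy)]
      rw [Finset.prod_congr rfl fun i _ => (hch _).2]
      simp
    · simp [hv]
  rw [Finset.sum_congr rfl fun w _ => hw w]
  exact pi_pushforward q2 Prod.snd v

lemma jointDet_pmf (hch : IsKernel ch) (hpU1 : IsPMF pU1) (hq2 : IsPMF q2) :
    IsPMF (jointDet ch pU1 q2 n f1 f2) := by
  constructor
  · rintro ⟨a, w, c⟩
    have h1 : 0 ≤ ∏ i, pU1 (a i) := Finset.prod_nonneg fun i _ => hpU1.1 _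
    have h2 : 0 ≤ ∏ i, q2 (w i) := Finset.prod_nonneg fun i _ => hq2.1 _
    have h3 : 0 ≤ ∏ i, ch (f1 a i, f2 (fun j => (w j).1) i) (c i) :=
      Finset.prod_nonneg fun i _ => (hch _).1 _
    exact mul_nonneg (mul_nonneg h1 h2) h3
  · rw [Fintype.sum_prod_type]
    have key : ∀ a : Fin n → U1,
        (∑ bc : (Fin n → U2 × V2) × (Fin n → Y1 × Y2),
          jointDet ch pU1 q2 n f1 f2 (a, bc))
        = ∏ i, pU1 (a i) := by
      intro a
      rw [Fintype.sum_prod_type]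
      have hic : ∀ w : Fin n → U2 × V2,
          ∑ c : Fin n → Y1 × Y2, ∏ i, ch (f1 a i, f2 (fun j => (w j).1) i) (c i)
            = 1 := by
        intro w
        rw [sum_pi_prod (g := fun i yy => ch (f1 a i, f2 (fun j => (w j).1) i) yy)]
        rw [Finset.prod_congr rfl fun i _ => (hch _).2]
        simp
      have hrow : ∀ w : Fin n → U2 × V2,
          (∑ c : Fin n → Y1 × Y2, jointDet ch pU1 q2 n f1 f2 (a, w, c))
          = (∏ i, pU1 (a i)) * (∏ i, q2 (w i)) := by
        intro w
        have : (∑ c : Fin n → Y1 × Y2, jointDet ch pU1 q2 n f1 f2 (a, w, c))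
            = ((∏ i, pU1 (a i)) * (∏ i, q2 (w i))) *
              ∑ c : Fin n → Y1 × Y2, ∏ i, ch (f1 a i, f2 (fun j => (w j).1) i) (c i) := by
          rw [Finset.mul_sum]
          exact Finset.sum_congr rfl fun c _ => rfl
        rw [this, hic w, mul_one]
      rw [Finset.sum_congr rfl fun w _ => hrow w, ← Finset.mul_sum,
        (IsPMF_pi hq2 n).2, mul_one]
    rw [Finset.sum_congr rfl fun a _ => key a]
    exact (IsPMF_pi hpU1 n).2


lemma joint_pr_AB {T : Type} [Fintype T] (β : (Fin n → U1) → T)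
    (hch : IsKernel ch)
    (u : Fin n → U1) (t : T) (v : Fin n → V2) :
    pr (jointDet ch pU1 q2 n f1 f2)
      (fun ω => (ω.1, (β ω.1, fun i => (ω.2.1 i).2)))
      (u, (t, v))
    = if β u = t then (∏ i, pU1 (u i)) * ∏ i, pr q2 Prod.snd (v i) else 0 := by
  have h1 : pr (jointDet ch pU1 q2 n f1 f2)
      (fun ω => (ω.1, (β ω.1, fun i => (ω.2.1 i).2))) (u, (t, v))
      = ∑ y : Fin n → Y1, pr (jointDet ch pU1 q2 n f1 f2)
        (fun ω => (ω.1, (β ω.1, fun i => (ω.2.1 i).2), fun i => (ω.2.2 i).1))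
        (u, (t, v), y) :=
    pr_triple_last (jointDet ch pU1 q2 n f1 f2) (fun ω => ω.1)
      (fun ω => (β ω.1, fun i => (ω.2.1 i).2)) (fun ω => fun i => (ω.2.2 i).1)
      u (t, v)
  rw [h1, Finset.sum_congr rfl fun y _ => joint_pr ch pU1 q2 n f1 f2 β u t v y]
  by_cases hb : β u = t
  · simp only [if_pos hb]
    rw [← Finset.mul_sum, Gfun_sum ch q2 n f2 hch (f1 u) v]
  · simp [hb]

lemma joint_pr_B {T : Type} [Fintype T] (β : (Fin n → U1) → T)
    (hch : IsKernel ch)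
    (t : T) (v : Fin n → V2) :
    pr (jointDet ch pU1 q2 n f1 f2)
      (fun ω => (β ω.1, fun i => (ω.2.1 i).2)) (t, v)
    = (∑ u : Fin n → U1, if β u = t then ∏ i, pU1 (u i) else 0)
        * ∏ i, pr q2 Prod.snd (v i) := by
  have h1 : pr (jointDet ch pU1 q2 n f1 f2)
      (fun ω => (β ω.1, fun i => (ω.2.1 i).2)) (t, v)
      = ∑ u : Fin n → U1, pr (jointDet ch pU1 q2 n f1 f2)
        (fun ω => (ω.1, (β ω.1, fun i => (ω.2.1 i).2))) (u, (t, v)) :=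
    pr_pair_snd (jointDet ch pU1 q2 n f1 f2) (fun ω => ω.1)
      (fun ω => (β ω.1, fun i => (ω.2.1 i).2)) (t, v)
  rw [h1, Finset.sum_congr rfl fun u _ => joint_pr_AB ch pU1 q2 n f1 f2 β hch u t v,
    Finset.sum_congr rfl (g := fun u => (if β u = t then ∏ i, pU1 (u i) else 0)
      * ∏ i, pr q2 Prod.snd (v i))
      (fun u _ => by by_cases hb : β u = t <;> simp [hb]),
    ← Finset.sum_mul]

lemma joint_pr_BC {T : Type} [Fintype T] (β : (Fin n → U1) → T)
    (ρ : T → Fin n → X1) (hρ : ∀ u, ρ (β u) = f1 u)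
    (t : T) (v : Fin n → V2) (y : Fin n → Y1) :
    pr (jointDet ch pU1 q2 n f1 f2)
      (fun ω => ((β ω.1, fun i => (ω.2.1 i).2), fun i => (ω.2.2 i).1))
      ((t, v), y)
    = (∑ u : Fin n → U1, if β u = t then ∏ i, pU1 (u i) else 0)
        * Gfun ch q2 n f2 (ρ t) v y := by
  have h1 : pr (jointDet ch pU1 q2 n f1 f2)
      (fun ω => ((β ω.1, fun i => (ω.2.1 i).2), fun i => (ω.2.2 i).1)) ((t, v), y)
      = ∑ u : Fin n → U1, pr (jointDet ch pU1 q2 n f1 f2)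
        (fun ω => (ω.1, (β ω.1, fun i => (ω.2.1 i).2), fun i => (ω.2.2 i).1))
        (u, (t, v), y) :=
    pr_pair_snd (jointDet ch pU1 q2 n f1 f2) (fun ω => ω.1)
      (fun ω => ((β ω.1, fun i => (ω.2.1 i).2), fun i => (ω.2.2 i).1)) ((t, v), y)
  rw [h1, Finset.sum_congr rfl fun u _ => joint_pr ch pU1 q2 n f1 f2 β u t v y,
    Finset.sum_congr rfl (g := fun u => (if β u = t then ∏ i, pU1 (u i) else 0)
      * Gfun ch q2 n f2 (ρ t) v y)
      (fun u _ => by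
        by_cases hb : β u = t
        · simp only [if_pos hb]
          rw [← hb, hρ u]
        · simp [hb]),
    ← Finset.sum_mul]

lemma markov_master {T : Type} [Fintype T] (β : (Fin n → U1) → T)
    (ρ : T → Fin n → X1) (hρ : ∀ u, ρ (β u) = f1 u) (hch : IsKernel ch) :
    MarkovChain (jointDet ch pU1 q2 n f1 f2)
      (fun ω => ω.1)
      (fun ω => (β ω.1, fun i => (ω.2.1 i).2))
      (fun ω => fun i => (ω.2.2 i).1) := by
  rintro a ⟨t, v⟩ c
  have e1 : pr (jointDet ch pU1 q2 n f1 f2)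
      (fun ω => (ω.1, (β ω.1, fun i => (ω.2.1 i).2), fun i => (ω.2.2 i).1))
      (a, (t, v), c)
      = if β a = t then (∏ i, pU1 (a i)) * Gfun ch q2 n f2 (f1 a) v c else 0 :=
    joint_pr ch pU1 q2 n f1 f2 β a t v c
  have e2 : pr (jointDet ch pU1 q2 n f1 f2)
      (fun ω => (β ω.1, fun i => (ω.2.1 i).2)) (t, v)
      = (∑ u : Fin n → U1, if β u = t then ∏ i, pU1 (u i) else 0)
        * ∏ i, pr q2 Prod.snd (v i) :=
    joint_pr_B ch pU1 q2 n f1 f2 β hch t v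
  have e3 : pr (jointDet ch pU1 q2 n f1 f2)
      (fun ω => (ω.1, (β ω.1, fun i => (ω.2.1 i).2))) (a, (t, v))
      = if β a = t then (∏ i, pU1 (a i)) * ∏ i, pr q2 Prod.snd (v i) else 0 :=
    joint_pr_AB ch pU1 q2 n f1 f2 β hch a t v
  have e4 : pr (jointDet ch pU1 q2 n f1 f2)
      (fun ω => ((β ω.1, fun i => (ω.2.1 i).2), fun i => (ω.2.2 i).1)) ((t, v), c)
      = (∑ u : Fin n → U1, if β u = t then ∏ i, pU1 (u i) else 0)
        * Gfun ch q2 n f2 (ρ t) v c :=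
    joint_pr_BC ch pU1 q2 n f1 f2 β ρ hρ t v c
  show pr (jointDet ch pU1 q2 n f1 f2)
      (fun ω => (ω.1, (β ω.1, fun i => (ω.2.1 i).2), fun i => (ω.2.2 i).1))
      (a, (t, v), c)
    * pr (jointDet ch pU1 q2 n f1 f2)
      (fun ω => (β ω.1, fun i => (ω.2.1 i).2)) (t, v)
    = pr (jointDet ch pU1 q2 n f1 f2)
      (fun ω => (ω.1, (β ω.1, fun i => (ω.2.1 i).2))) (a, (t, v))
    * pr (jointDet ch pU1 q2 n f1 f2)
      (fun ω => ((β ω.1, fun i => (ω.2.1 i).2), fun i => (ω.2.2 i).1)) ((t, v), c)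
  rw [e1, e2, e3, e4]
  by_cases hb : β a = t
  · simp only [if_pos hb]
    rw [show f1 a = ρ t from by rw [← hb, hρ a]]
    ring
  · simp [hb]

end JointAux

theorem stmt9 (ch : X1 × X2 → Y1 × Y2 → ℝ)
    (pU1 : U1 → ℝ) (h1 : U1 → V1) (q2 : U2 × V2 → ℝ) (n : ℕ)
    (f1 : (Fin n → U1) → Fin n → X1) (f2 : (Fin n → U2) → Fin n → X2)
    (hch : IsKernel ch) (hpU1 : IsPMF pU1) (hq2 : IsPMF q2) :
    (let p := jointDet ch pU1 q2 n f1 f2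
     let vU1 := fun (ω : (Fin n → U1) × (Fin n → U2 × V2) × (Fin n → Y1 × Y2)) => ω.1
     let vV1 := fun (ω : (Fin n → U1) × (Fin n → U2 × V2) × (Fin n → Y1 × Y2)) =>
       fun i => h1 (ω.1 i)
     let vV2 := fun (ω : (Fin n → U1) × (Fin n → U2 × V2) × (Fin n → Y1 × Y2)) =>
       fun i => (ω.2.1 i).2
     let vX1 := fun (ω : (Fin n → U1) × (Fin n → U2 × V2) × (Fin n → Y1 × Y2)) => f1 ω.1
     let vY1 := fun (ω : (Fin n → U1) × (Fin n → U2 × V2) × (Fin n → Y1 × Y2)) =>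
       fun i => (ω.2.2 i).1
     ((n : ℝ) * condEnt pU1 id h1 ≤
        cmi p vX1 vY1 (fun ω => (vV1 ω, vV2 ω)) +
          condEnt p vU1 (fun ω => (vY1 ω, vV2 ω))) ∧
     ((n : ℝ) * ent pU1 id = (n : ℝ) * ent pU1 h1 + (n : ℝ) * condEnt pU1 id h1) ∧
     ((n : ℝ) * ent pU1 id ≤
        cmi p vX1 vY1 vV2 + condEnt p vU1 (fun ω => (vY1 ω, vV2 ω)))) := by
  intro p vU1 vV1 vV2 vX1 vY1
  have hp : IsPMF p := jointDet_pmf ch pU1 q2 n f1 f2 hch hpU1 hq2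
  have hqV : IsPMF (pr q2 Prod.snd) := IsPMF_pr hq2 Prod.snd
  have hqW : IsPMF (pr pU1 h1) := IsPMF_pr hpU1 h1
  -- single-letter facts
  have hent_id : ent pU1 id = Hq pU1 := by
    rw [ent_eq_Hq]
    congr 1
    funext a
    exact pr_id pU1 a
  have hent_h1 : ent pU1 h1 = Hq (pr pU1 h1) := rfl
  have hpair_id : ent pU1 (fun u => (u, h1 u)) = ent pU1 id :=
    ent_comp pU1 id (g := fun a => (a, h1 a))
      (fun a b hh => congrArg Prod.fst hh)
  have hcond0 : condEnt pU1 id h1 = Hq pU1 - Hq (pr pU1 h1) := by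
    have : condEnt pU1 id h1 = ent pU1 (fun u => (u, h1 u)) - ent pU1 h1 := rfl
    rw [this, hpair_id, hent_id, hent_h1]
  -- marginals of the joint law
  have hMb : ∀ (u : Fin n → U1) (v : Fin n → V2),
      pr p (fun ω => (vU1 ω, vV2 ω)) (u, v)
        = (∏ i, pU1 (u i)) * ∏ i, pr q2 Prod.snd (v i) := by
    intro u v
    have h1' := joint_pr_B ch pU1 q2 n f1 f2 (fun a => a) hch u v
    have h0 : pr p (fun ω => (vU1 ω, vV2 ω)) (u, v)
        = pr (jointDet ch pU1 q2 n f1 f2)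
          (fun ω => ((fun a => a) ω.1, fun i => (ω.2.1 i).2)) (u, v) := rfl
    rw [h0, h1']
    congr 1
    have hs : (∑ a : Fin n → U1, if a = u then ∏ i, pU1 (a i) else 0)
        = ∏ i, pU1 (u i) := by simp
    convert hs using 5
  have hMa : pr p vU1 = fun u => ∏ i, pU1 (u i) := by
    funext u
    have h1' : pr p vU1 u = ∑ v, pr p (fun ω => (vU1 ω, vV2 ω)) (u, v) :=
      pr_pair_fst p vU1 vV2 u
    rw [h1', Finset.sum_congr rfl fun v _ => hMb u v, ← Finset.mul_sum,
      (IsPMF_pi hqV n).2, mul_one]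
  have hMc : ∀ (w : Fin n → V1) (v : Fin n → V2),
      pr p (fun ω => (vV1 ω, vV2 ω)) (w, v)
        = (∏ i, pr pU1 h1 (w i)) * ∏ i, pr q2 Prod.snd (v i) := by
    intro w v
    have h1' := joint_pr_B ch pU1 q2 n f1 f2 (fun a => fun i => h1 (a i)) hch w v
    have h0 : pr p (fun ω => (vV1 ω, vV2 ω)) (w, v)
        = pr (jointDet ch pU1 q2 n f1 f2)
          (fun ω => ((fun a => fun i => h1 (a i)) ω.1, fun i => (ω.2.1 i).2)) (w, v) := rfl
    rw [h0, h1']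
    congr 1
    convert pi_pushforward pU1 h1 w using 5
  have hMd : pr p vV2 = fun v => ∏ i, pr q2 Prod.snd (v i) := by
    funext v
    have h1' : pr p vV2 v = ∑ u, pr p (fun ω => (vU1 ω, vV2 ω)) (u, v) :=
      pr_pair_snd p vU1 vV2 v
    rw [h1', Finset.sum_congr rfl fun u _ => hMb u v, ← Finset.sum_mul,
      (IsPMF_pi hpU1 n).2, one_mul]
  -- entropies of the marginals
  have eU : ent p vU1 = (n : ℝ) * Hq pU1 := by
    calc ent p vU1 = Hq (pr p vU1) := rfl
      _ = Hq (fun u : Fin n → U1 => ∏ i, pU1 (u i)) := by rw [hMa]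
      _ = (n : ℝ) * Hq pU1 := Hq_pi hpU1 n
  have eUV2 : ent p (fun ω => (vU1 ω, vV2 ω))
      = (n : ℝ) * Hq pU1 + (n : ℝ) * Hq (pr q2 Prod.snd) := by
    have hf : pr p (fun ω => (vU1 ω, vV2 ω))
        = fun q : (Fin n → U1) × (Fin n → V2) =>
          (∏ i, pU1 (q.1 i)) * ∏ i, pr q2 Prod.snd (q.2 i) := by
      funext q
      obtain ⟨u, v⟩ := q
      exact hMb u v
    calc ent p (fun ω => (vU1 ω, vV2 ω)) = Hq (pr p (fun ω => (vU1 ω, vV2 ω))) := rfl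
      _ = Hq (fun q : (Fin n → U1) × (Fin n → V2) =>
          (∏ i, pU1 (q.1 i)) * ∏ i, pr q2 Prod.snd (q.2 i)) := by rw [hf]
      _ = Hq (fun u : Fin n → U1 => ∏ i, pU1 (u i))
          + Hq (fun v : Fin n → V2 => ∏ i, pr q2 Prod.snd (v i)) :=
        Hq_prod (IsPMF_pi hpU1 n) (IsPMF_pi hqV n)
      _ = _ := by rw [Hq_pi hpU1 n, Hq_pi hqV n]
  have eV1V2 : ent p (fun ω => (vV1 ω, vV2 ω))
      = (n : ℝ) * Hq (pr pU1 h1) + (n : ℝ) * Hq (pr q2 Prod.snd) := by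
    have hf : pr p (fun ω => (vV1 ω, vV2 ω))
        = fun q : (Fin n → V1) × (Fin n → V2) =>
          (∏ i, pr pU1 h1 (q.1 i)) * ∏ i, pr q2 Prod.snd (q.2 i) := by
      funext q
      obtain ⟨w, v⟩ := q
      exact hMc w v
    calc ent p (fun ω => (vV1 ω, vV2 ω)) = Hq (pr p (fun ω => (vV1 ω, vV2 ω))) := rfl
      _ = Hq (fun q : (Fin n → V1) × (Fin n → V2) =>
          (∏ i, pr pU1 h1 (q.1 i)) * ∏ i, pr q2 Prod.snd (q.2 i)) := by rw [hf]
      _ = Hq (fun w : Fin n → V1 => ∏ i, pr pU1 h1 (w i))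
          + Hq (fun v : Fin n → V2 => ∏ i, pr q2 Prod.snd (v i)) :=
        Hq_prod (IsPMF_pi hqW n) (IsPMF_pi hqV n)
      _ = _ := by rw [Hq_pi hqW n, Hq_pi hqV n]
  have eV2 : ent p vV2 = (n : ℝ) * Hq (pr q2 Prod.snd) := by
    calc ent p vV2 = Hq (pr p vV2) := rfl
      _ = Hq (fun v : Fin n → V2 => ∏ i, pr q2 Prod.snd (v i)) := by rw [hMd]
      _ = _ := Hq_pi hqV n
  -- relabelings
  have R1 : ent p (fun ω => (vU1 ω, (vV1 ω, vV2 ω))) = ent p (fun ω => (vU1 ω, vV2 ω)) :=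
    ent_comp p (fun ω => (vU1 ω, vV2 ω))
      (g := fun q : (Fin n → U1) × (Fin n → V2) => (q.1, ((fun i => h1 (q.1 i)), q.2)))
      (fun a b hh => by
        simp only [Prod.ext_iff] at hh ⊢
        tauto)
  have R2 : ent p (fun ω => (vU1 ω, (vY1 ω, (vV1 ω, vV2 ω))))
      = ent p (fun ω => (vU1 ω, (vY1 ω, vV2 ω))) :=
    ent_comp p (fun ω => (vU1 ω, (vY1 ω, vV2 ω)))
      (g := fun q : (Fin n → U1) × ((Fin n → Y1) × (Fin n → V2)) =>
        (q.1, (q.2.1, ((fun i => h1 (q.1 i)), q.2.2))))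
      (fun a b hh => by
        simp only [Prod.ext_iff] at hh ⊢
        tauto)
  have R3 : ent p (fun ω => (vY1 ω, (vV1 ω, vV2 ω)))
      = ent p (fun ω => (vV1 ω, (vY1 ω, vV2 ω))) :=
    ent_comp p (fun ω => (vV1 ω, (vY1 ω, vV2 ω)))
      (g := fun q : (Fin n → V1) × ((Fin n → Y1) × (Fin n → V2)) =>
        (q.2.1, (q.1, q.2.2)))
      (fun a b hh => by
        simp only [Prod.ext_iff] at hh ⊢
        tauto)
  -- Markov chains and vanishing conditional mutual information
  have hmk1 : MarkovChain p vU1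
      (fun ω => ((f1 ω.1, fun i => h1 (ω.1 i)), fun i => (ω.2.1 i).2)) vY1 :=
    markov_master ch pU1 q2 n f1 f2
      (fun a => (f1 a, fun i => h1 (a i))) Prod.fst (fun u => rfl) hch
  have hz1 : cmi p vU1 vY1 (fun ω => (vX1 ω, (vV1 ω, vV2 ω))) = 0 := by
    have hrel : cmi p vU1 vY1
        (fun ω => ((f1 ω.1, fun i => h1 (ω.1 i)), fun i => (ω.2.1 i).2))
        = cmi p vU1 vY1 (fun ω => (vX1 ω, (vV1 ω, vV2 ω))) :=
      cmi_relabel_cond p vU1 vY1 (fun ω => (vX1 ω, (vV1 ω, vV2 ω)))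
        (e := fun q : (Fin n → X1) × ((Fin n → V1) × (Fin n → V2)) =>
          ((q.1, q.2.1), q.2.2))
        (fun a b hh => by
          simp only [Prod.ext_iff] at hh ⊢
          tauto)
    rw [← hrel]
    exact cmi_eq_zero hp hmk1
  have hmk3 : MarkovChain p vU1
      (fun ω => (f1 ω.1, fun i => (ω.2.1 i).2)) vY1 :=
    markov_master ch pU1 q2 n f1 f2 f1 id (fun u => rfl) hch
  have hz3 : cmi p vU1 vY1 (fun ω => (vX1 ω, vV2 ω)) = 0 :=
    cmi_eq_zero hp hmk3
  -- chain rules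
  have s2 : condEnt p vU1 (fun ω => (vV1 ω, vV2 ω))
      = cmi p vU1 vY1 (fun ω => (vV1 ω, vV2 ω))
        + condEnt p vU1 (fun ω => (vY1 ω, (vV1 ω, vV2 ω))) :=
    condEnt_chain p vU1 vY1 (fun ω => (vV1 ω, vV2 ω))
  have s3 : cmi p vU1 vY1 (fun ω => (vV1 ω, vV2 ω))
      = cmi p vX1 vY1 (fun ω => (vV1 ω, vV2 ω))
        + cmi p vU1 vY1 (fun ω => (vX1 ω, (vV1 ω, vV2 ω))) :=
    cmi_chain_fn p vU1 vY1 (fun ω => (vV1 ω, vV2 ω)) f1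
  have t2 : condEnt p vU1 vV2
      = cmi p vU1 vY1 vV2 + condEnt p vU1 (fun ω => (vY1 ω, vV2 ω)) :=
    condEnt_chain p vU1 vY1 vV2
  have t3 : cmi p vU1 vY1 vV2
      = cmi p vX1 vY1 vV2 + cmi p vU1 vY1 (fun ω => (vX1 ω, vV2 ω)) :=
    cmi_chain_fn p vU1 vY1 vV2 f1
  -- values of the conditional entropies
  have s1 : condEnt p vU1 (fun ω => (vV1 ω, vV2 ω)) = (n : ℝ) * condEnt pU1 id h1 := by
    have hdef : condEnt p vU1 (fun ω => (vV1 ω, vV2 ω))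
        = ent p (fun ω => (vU1 ω, (vV1 ω, vV2 ω))) - ent p (fun ω => (vV1 ω, vV2 ω)) := rfl
    rw [hdef, R1, eUV2, eV1V2, hcond0]
    ring
  have t1 : condEnt p vU1 vV2 = (n : ℝ) * ent pU1 id := by
    have hdef : condEnt p vU1 vV2
        = ent p (fun ω => (vU1 ω, vV2 ω)) - ent p vV2 := rfl
    rw [hdef, eUV2, eV2, hent_id]
    ring
  -- conditioning reduces entropy
  have s5 : condEnt p vU1 (fun ω => (vY1 ω, (vV1 ω, vV2 ω)))
      ≤ condEnt p vU1 (fun ω => (vY1 ω, vV2 ω)) := by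
    have hce : 0 ≤ condEnt p vV1 (fun ω => (vY1 ω, vV2 ω)) :=
      condEnt_nonneg hp vV1 (fun ω => (vY1 ω, vV2 ω))
    have d1 : condEnt p vU1 (fun ω => (vY1 ω, (vV1 ω, vV2 ω)))
        = ent p (fun ω => (vU1 ω, (vY1 ω, (vV1 ω, vV2 ω))))
          - ent p (fun ω => (vY1 ω, (vV1 ω, vV2 ω))) := rfl
    have d2 : condEnt p vU1 (fun ω => (vY1 ω, vV2 ω))
        = ent p (fun ω => (vU1 ω, (vY1 ω, vV2 ω)))
          - ent p (fun ω => (vY1 ω, vV2 ω)) := rfl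
    have d3 : condEnt p vV1 (fun ω => (vY1 ω, vV2 ω))
        = ent p (fun ω => (vV1 ω, (vY1 ω, vV2 ω)))
          - ent p (fun ω => (vY1 ω, vV2 ω)) := rfl
    rw [d1, d2]
    rw [d3] at hce
    rw [R2, R3]
    linarith
  refine ⟨?_, ?_, ?_⟩
  · linarith [s1, s2, s3, hz1, s5]
  · rw [hcond0, hent_id, hent_h1]
    ring
  · linarith [t1, t2, t3, hz3]

end Stmt9

end Paper
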